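/- Fix reals c, q, L, H > 0, D ≥ 1, Q₂ ≥ 0, Q₃ ∈ ℝ, u ∈ ℝ, with q·L·H = 1. Fix an integer m ≥ 1, i₀ ∈ ℤ, 0 < t₀ < 1 and ε > 0. Set y₀ := √(4c/(4D² − 1))·L, x₀ := √(4c/(4D² − 1))·(Q₂ + q/2), Y₂ := t₀·y₀, X₂[k] := t₀·(x₀ + k·q·y₀/L), Δ_k := Y₂·ε/(X₂[k] + ε), □_k := [X₂[k] − ε, X₂[k]] × [Y₂ − Δ_k, Y₂], and f₂(x, y) := (H·(x² + c·q²)/(q·y), H·x/q). Assume H²·q·Y₂/L is irrational. Then there exist infinitely many k ∈ ℕ for which there are integers s_k, i_k such that for every r ∈ {0, 1, …, m−1} the point ((s_k + r)·q + (i₀ + m·i_k)·Q₂ + Q₃, (i₀ + m·i_k)·L + u) belongs to the image f₂(□_k); moreover along these k the quantities (s_k + r)·q + (i₀ + m·i_k)·Q₂ tend to infinity. -/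

import Mathlib

open Real Filter

noncomputable section

/-- the planar part of the map `f₂`: `f₂(x,y) = (H(x² + cq²)/(qy), Hx/q)`. -/
def f2p (c q H : ℝ) (p : ℝ × ℝ) : ℝ × ℝ :=
  (H * (p.1 ^ 2 + c * q ^ 2) / (q * p.2), H * p.1 / q)

private lemma crossing (β θ : ℝ) (hθ0 : θ ≠ 0) (hθ1 : |θ| < 1) (k₀ : ℕ) :
    ∃ k : ℕ, k₀ ≤ k ∧ Int.fract (β + k * θ) < |θ| := by
  rcases hθ0.lt_or_gt with hneg | hpos
  · -- θ < 0 : walk downwards; just before crossing an integer the fractional part is small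
    set M : ℤ := ⌊β + k₀ * θ⌋ with hM
    have hM1 : (M : ℝ) ≤ β + k₀ * θ := Int.floor_le _
    have hex : ∃ n : ℕ, β + ((k₀ + n : ℕ) : ℝ) * θ < M := by
      obtain ⟨n, hn⟩ := exists_nat_ge (((M : ℝ) - (β + k₀ * θ)) / θ + 1)
      refine ⟨n, ?_⟩
      have h2 : (n : ℝ) * θ ≤ (((M : ℝ) - (β + k₀ * θ)) / θ + 1) * θ :=
        mul_le_mul_of_nonpos_right hn hneg.le
      have h3 : ((M : ℝ) - (β + k₀ * θ)) / θ * θ = (M : ℝ) - (β + k₀ * θ) :=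
        div_mul_cancel₀ _ hθ0
      push_cast
      nlinarith
    classical
    have h0 : ¬ (β + ((k₀ + 0 : ℕ) : ℝ) * θ < M) := by push_cast; push_cast at hM1; linarith
    have hn₀ : Nat.find hex ≠ 0 := fun h => h0 (h ▸ Nat.find_spec hex)
    obtain ⟨n₁, hn₁⟩ := Nat.exists_eq_succ_of_ne_zero hn₀
    have hprev : ¬ (β + ((k₀ + n₁ : ℕ) : ℝ) * θ < M) := Nat.find_min hex (by omega)
    have hcur : β + ((k₀ + (n₁ + 1) : ℕ) : ℝ) * θ < M := by
      have := Nat.find_spec hex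
      rwa [hn₁] at this
    refine ⟨k₀ + n₁, by omega, ?_⟩
    push_cast at hprev hcur ⊢
    rw [not_lt] at hprev
    have habs : |θ| = -θ := abs_of_neg hneg
    have h2 : β + ((k₀ : ℝ) + n₁) * θ < (M : ℝ) - θ := by nlinarith
    have hfr : Int.fract (β + ((k₀ : ℝ) + n₁) * θ) = β + ((k₀ : ℝ) + n₁) * θ - M := by
      calc Int.fract (β + ((k₀ : ℝ) + n₁) * θ)
          = Int.fract (β + ((k₀ : ℝ) + n₁) * θ - M) := (Int.fract_sub_intCast _ _).symm
        _ = β + ((k₀ : ℝ) + n₁) * θ - M :=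
            Int.fract_eq_self.mpr ⟨by linarith, by linarith⟩
    rw [hfr]
    linarith
  · -- θ > 0 : walk upwards; just after crossing an integer the fractional part is small
    set M : ℤ := ⌊β + k₀ * θ⌋ + 1 with hM
    have hM1 : β + k₀ * θ < (M : ℝ) := by
      rw [hM]
      push_cast
      linarith [Int.lt_floor_add_one (β + k₀ * θ)]
    have hex : ∃ n : ℕ, (M : ℝ) ≤ β + ((k₀ + n : ℕ) : ℝ) * θ := by
      obtain ⟨n, hn⟩ := exists_nat_ge (((M : ℝ) - (β + k₀ * θ)) / θ)
      refine ⟨n, ?_⟩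
      have h2 : (M : ℝ) - (β + k₀ * θ) ≤ n * θ := by
        have := (div_le_iff₀ hpos).mp hn
        linarith
      push_cast
      nlinarith
    classical
    have h0 : ¬ ((M : ℝ) ≤ β + ((k₀ + 0 : ℕ) : ℝ) * θ) := by push_cast; linarith
    have hn₀ : Nat.find hex ≠ 0 := fun h => h0 (h ▸ Nat.find_spec hex)
    obtain ⟨n₁, hn₁⟩ := Nat.exists_eq_succ_of_ne_zero hn₀
    have hprev : ¬ ((M : ℝ) ≤ β + ((k₀ + n₁ : ℕ) : ℝ) * θ) := Nat.find_min hex (by omega)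
    have hcur : (M : ℝ) ≤ β + ((k₀ + (n₁ + 1) : ℕ) : ℝ) * θ := by
      have := Nat.find_spec hex
      rwa [hn₁] at this
    refine ⟨k₀ + (n₁ + 1), by omega, ?_⟩
    push_cast at hprev hcur ⊢
    rw [not_le] at hprev
    have habs : |θ| = θ := abs_of_pos hpos
    have h2 : β + ((k₀ : ℝ) + (n₁ + 1)) * θ < (M : ℝ) + θ := by nlinarith
    have hfr : Int.fract (β + ((k₀ : ℝ) + (n₁ + 1)) * θ)
        = β + ((k₀ : ℝ) + (n₁ + 1)) * θ - M := by
      calc Int.fract (β + ((k₀ : ℝ) + (n₁ + 1)) * θ)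
          = Int.fract (β + ((k₀ : ℝ) + (n₁ + 1)) * θ - M) := (Int.fract_sub_intCast _ _).symm
        _ = β + ((k₀ : ℝ) + (n₁ + 1)) * θ - M :=
            Int.fract_eq_self.mpr ⟨by linarith, by linarith⟩
    rw [hfr]
    linarith

private lemma orbit_infinite (β γ δ : ℝ) (hγ : Irrational γ) (hδ : 0 < δ) :
    {k : ℕ | Int.fract (β + k * γ) < δ}.Infinite := by
  have main : ∀ k₀ : ℕ, ∃ k, k₀ ≤ k ∧ Int.fract (β + k * γ) < δ := by
    intro k₀
    rcases le_or_gt 1 δ with h1 | h1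
    · exact ⟨k₀, le_rfl, lt_of_lt_of_le (Int.fract_lt_one _) h1⟩
    · obtain ⟨n, hn⟩ := exists_nat_one_div_lt hδ
      obtain ⟨j, l, hl0, _hln, hap⟩ :=
        Real.exists_int_int_abs_mul_sub_le γ (Nat.succ_pos n)
      set θ : ℝ := l * γ - j with hθ
      have hθirr : Irrational θ := (hγ.intCast_mul (ne_of_gt hl0)).sub_intCast j
      have hθ0 : θ ≠ 0 := hθirr.ne_zero
      have habs : |θ| < δ := by
        push_cast at hap
        have h3 : (1 : ℝ) / ((n : ℝ) + 1 + 1) ≤ 1 / ((n : ℝ) + 1) := by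
          apply one_div_le_one_div_of_le
          · positivity
          · linarith
        calc |θ| ≤ 1 / ((n : ℝ) + 1 + 1) := hap
          _ ≤ 1 / ((n : ℝ) + 1) := h3
          _ < δ := hn
      have hθ1 : |θ| < 1 := habs.trans h1
      obtain ⟨k, hk₀, hkfr⟩ := crossing β θ hθ0 hθ1 k₀
      refine ⟨k * l.toNat, ?_, ?_⟩
      · calc k₀ ≤ k := hk₀
          _ ≤ k * l.toNat := Nat.le_mul_of_pos_right k (by omega)
      · have hcast : ((k * l.toNat : ℕ) : ℝ) * γ = (k : ℝ) * θ + ((k * j : ℤ) : ℝ) := by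
          have hl : ((l.toNat : ℤ) : ℝ) = (l : ℝ) := by
            rw [Int.toNat_of_nonneg hl0.le]
          push_cast at hl ⊢
          rw [hθ, hl]
          ring
        rw [hcast, show β + ((k : ℝ) * θ + ((k * j : ℤ) : ℝ))
              = (β + (k : ℝ) * θ) + ((k * j : ℤ) : ℝ) by ring,
          Int.fract_add_intCast]
        exact hkfr.trans habs
  apply Set.infinite_of_not_bddAbove
  rintro ⟨b, hb⟩
  obtain ⟨k, hk, hfr⟩ := main (b + 1)
  have : k ≤ b := hb hfr
  omega

set_option maxHeartbeats 2000000 in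
theorem statement16
    (c q L H D Q2 Q3 u : ℝ) (hc : 0 < c) (hq : 0 < q) (hL : 0 < L) (hH : 0 < H)
    (hD : 1 ≤ D) (hQ2 : 0 ≤ Q2) (hqLH : q * L * H = 1)
    (m : ℕ) (hm : 1 ≤ m) (i₀ : ℤ)
    (t₀ ε : ℝ) (ht₀ : 0 < t₀) (ht₀' : t₀ < 1) (hε : 0 < ε)
    (y₀ x₀ : ℝ)
    (hy₀ : y₀ = Real.sqrt (4 * c / (4 * D ^ 2 - 1)) * L)
    (hx₀ : x₀ = Real.sqrt (4 * c / (4 * D ^ 2 - 1)) * (Q2 + q / 2))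
    (Y₂ : ℝ) (hY₂ : Y₂ = t₀ * y₀)
    (X₂ : ℕ → ℝ) (hX₂ : ∀ k : ℕ, X₂ k = t₀ * (x₀ + (k : ℝ) * q * y₀ / L))
    (Δ : ℕ → ℝ) (hΔ : ∀ k : ℕ, Δ k = Y₂ * ε / (X₂ k + ε))
    (rect : ℕ → Set (ℝ × ℝ))
    (hrect : ∀ k : ℕ, rect k = Set.Icc (X₂ k - ε) (X₂ k) ×ˢ Set.Icc (Y₂ - Δ k) Y₂)
    (hirr : Irrational (H ^ 2 * q * Y₂ / L)) :
    ∃ (K : ℕ → ℕ) (S I : ℕ → ℤ), StrictMono K ∧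
      (∀ j : ℕ, ∀ r : ℕ, r < m →
        ((((S j : ℝ) + (r : ℝ)) * q + ((i₀ : ℝ) + (m : ℝ) * (I j : ℝ)) * Q2 + Q3,
            ((i₀ : ℝ) + (m : ℝ) * (I j : ℝ)) * L + u) ∈
          f2p c q H '' rect (K j))) ∧
      (∀ r : ℕ, r < m →
        Tendsto
          (fun j : ℕ =>
            ((S j : ℝ) + (r : ℝ)) * q + ((i₀ : ℝ) + (m : ℝ) * (I j : ℝ)) * Q2)
          atTop atTop) := by
  classical
  have hm0 : (0 : ℝ) < (m : ℝ) := by exact_mod_cast hm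
  have hD2 : (0 : ℝ) < 4 * D ^ 2 - 1 := by nlinarith
  have hsq : 0 < Real.sqrt (4 * c / (4 * D ^ 2 - 1)) :=
    Real.sqrt_pos.2 (by positivity)
  have hy0 : 0 < y₀ := by rw [hy₀]; positivity
  have hY2pos : 0 < Y₂ := by rw [hY₂]; positivity
  -- basic abbreviations
  obtain ⟨α, hαdef⟩ : ∃ z : ℝ, z = t₀ * q * y₀ / L := ⟨_, rfl⟩
  have hαpos : 0 < α := by rw [hαdef]; positivity
  have hX2eq : ∀ k : ℕ, X₂ k = t₀ * x₀ + (k : ℝ) * α := by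
    intro k; rw [hX₂, hαdef]; ring
  obtain ⟨P, hPdef⟩ : ∃ z : ℝ, z = q * (m : ℝ) * L / H := ⟨_, rfl⟩
  have hPpos : 0 < P := by rw [hPdef]; positivity
  obtain ⟨c₂, hc₂def⟩ : ∃ z : ℝ, z = q * ((i₀ : ℝ) * L + u) / H := ⟨_, rfl⟩
  obtain ⟨γ, hγdef⟩ : ∃ z : ℝ, z = α / P := ⟨_, rfl⟩
  obtain ⟨β, hβdef⟩ : ∃ z : ℝ, z = (t₀ * x₀ - c₂) / P := ⟨_, rfl⟩
  obtain ⟨δ, hδdef⟩ : ∃ z : ℝ, z = ε / P := ⟨_, rfl⟩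
  have hδpos : 0 < δ := by rw [hδdef]; exact div_pos hε hPpos
  have hβγ : ∀ k : ℕ, (X₂ k - c₂) / P = β + (k : ℝ) * γ := by
    intro k
    rw [hβdef, hγdef, hX2eq k]
    field_simp
    ring
  -- irrationality of the rotation number
  have hγirr : Irrational γ := by
    have hγeq : γ = (H ^ 2 * q * Y₂ / L) / (m : ℝ) := by
      rw [hγdef, hαdef, hPdef, hY₂]
      field_simp
      linear_combination (-1 : ℝ) * hqLH
    rw [hγeq]
    exact hirr.div_natCast (by omega)
  -- tendsto of X₂
  have hX2T : Tendsto X₂ atTop atTop := by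
    have T1 : Tendsto (fun k : ℕ => (k : ℝ) * α) atTop atTop :=
      tendsto_natCast_atTop_atTop.atTop_mul_const hαpos
    have T2 := tendsto_atTop_add_const_left atTop (t₀ * x₀) T1
    exact T2.congr fun k => (hX2eq k).symm
  obtain ⟨C, hCdef⟩ : ∃ z : ℝ, z = 3 * ε + (m : ℝ) * q * q * Y₂ / (H * ε) := ⟨_, rfl⟩
  obtain ⟨N₀, hN₀⟩ := eventually_atTop.mp (hX2T.eventually_ge_atTop (max ε C))
  -- the good set
  obtain ⟨p, hpdef⟩ : ∃ z : ℕ → Prop, z = fun k => N₀ ≤ k ∧ Int.fract (β + (k : ℝ) * γ) < δ := ⟨_, rfl⟩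
  have hpinf : (setOf p).Infinite := by
    have h1 := orbit_infinite β γ δ hγirr hδpos
    have h2 : {k : ℕ | Int.fract (β + (k : ℝ) * γ) < δ} \ {k : ℕ | k < N₀} ⊆ setOf p := by
      intro k hk
      simp only [hpdef, Set.mem_setOf_eq]
      exact ⟨not_lt.1 hk.2, hk.1⟩
    exact ((h1.diff (Set.finite_lt_nat N₀)).mono h2)
  have hqY : 0 < q * Y₂ := mul_pos hq hY2pos
  -- key construction for each good k
  have key : ∀ k : ℕ, p k → ∃ s i : ℤ,
      (∀ r : ℕ, r < m →
        ((((s : ℝ) + (r : ℝ)) * q + ((i₀ : ℝ) + (m : ℝ) * (i : ℝ)) * Q2 + Q3,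
          ((i₀ : ℝ) + (m : ℝ) * (i : ℝ)) * L + u) ∈ f2p c q H '' rect k)) ∧
      (∀ r : ℕ, r < m →
        H * (max (X₂ k - ε) 0) ^ 2 / (q * Y₂) - Q3 ≤
          ((s : ℝ) + (r : ℝ)) * q + ((i₀ : ℝ) + (m : ℝ) * (i : ℝ)) * Q2) := by
    intro k hk
    simp only [hpdef] at hk
    obtain ⟨hkN, hkfr⟩ := hk
    have hXk : max ε C ≤ X₂ k := hN₀ k hkN
    have hXε : ε ≤ X₂ k := le_trans (le_max_left _ _) hXk
    have hXC : C ≤ X₂ k := le_trans (le_max_right _ _) hXk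
    obtain ⟨t, ht⟩ : ∃ z : ℝ, z = (X₂ k - c₂) / P := ⟨_, rfl⟩
    obtain ⟨i, hi⟩ : ∃ z : ℤ, z = ⌊t⌋ := ⟨_, rfl⟩
    obtain ⟨x, hx⟩ : ∃ z : ℝ, z = P * (i : ℝ) + c₂ := ⟨_, rfl⟩
    have hPt : P * t = X₂ k - c₂ := by rw [ht]; field_simp
    have hxle : x ≤ X₂ k := by
      have h1 : P * (i : ℝ) ≤ P * t := by
        have hit : (i : ℝ) ≤ t := by rw [hi]; exact Int.floor_le t
        exact mul_le_mul_of_nonneg_left hit hPpos.le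
      rw [hx]; linarith
    have hxge : X₂ k - ε ≤ x := by
      have h3 : X₂ k - x = P * Int.fract t := by
        rw [Int.fract, hx, ← hi]
        linear_combination -hPt
      have h4 : Int.fract t < δ := by
        rw [ht, hβγ k]; exact hkfr
      have h5 : P * Int.fract t < P * δ :=
        mul_lt_mul_of_pos_left h4 hPpos
      have h6 : P * δ = ε := by rw [hδdef]; field_simp
      linarith
    have hXεk : 0 ≤ X₂ k - ε := by linarith
    have hxpos : 0 ≤ x := le_trans hXεk hxge
    have hwx : H * x / q = ((i₀ : ℝ) + (m : ℝ) * (i : ℝ)) * L + u := by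
      rw [hx, hc₂def, hPdef]
      field_simp
      ring
    obtain ⟨N, hNdef⟩ : ∃ z : ℝ, z = H * (x ^ 2 + c * q ^ 2) := ⟨_, rfl⟩
    have hNpos : 0 < N := by
      rw [hNdef]
      apply mul_pos hH
      linarith [sq_nonneg x, mul_pos hc (pow_pos hq 2)]
    have hΔk : Δ k = Y₂ * ε / (X₂ k + ε) := hΔ k
    have hXkpos : 0 < X₂ k := lt_of_lt_of_le hε hXε
    have hXkε : 0 < X₂ k + ε := by linarith
    have hΔpos : 0 < Δ k := by rw [hΔk]; exact div_pos (mul_pos hY2pos hε) hXkε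
    have hΔlt : Δ k < Y₂ := by
      rw [hΔk, div_lt_iff₀ hXkε]
      have := mul_lt_mul_of_pos_left (show ε < X₂ k + ε by linarith) hY2pos
      linarith
    have hYΔ : 0 < Y₂ - Δ k := by linarith
    -- the inequality B - A ≥ m q (cleared of denominators)
    have h1 : (m : ℝ) * q * q * Y₂ ≤ (X₂ k - 3 * ε) * (H * ε) := by
      have hHε : (0 : ℝ) < H * ε := mul_pos hH hε
      have hcc : (m : ℝ) * q * q * Y₂ / (H * ε) * (H * ε) = (m : ℝ) * q * q * Y₂ :=
        div_mul_cancel₀ _ hHε.ne'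
      have hXC' : (m : ℝ) * q * q * Y₂ / (H * ε) ≤ X₂ k - 3 * ε := by
        rw [hCdef] at hXC; linarith
      have h := mul_le_mul_of_nonneg_right hXC' hHε.le
      rw [hcc] at h
      exact h
    have h2 : (m : ℝ) * q * q * Y₂ * (X₂ k + ε) ≤ H * (X₂ k - ε) ^ 2 * ε := by
      have ha := mul_le_mul_of_nonneg_right h1 hXkε.le
      have hid : H * (X₂ k - ε) ^ 2 * ε - (X₂ k - 3 * ε) * (H * ε) * (X₂ k + ε)
          = 4 * (H * ε) * ε ^ 2 := by ring
      have hpos4 : 0 ≤ 4 * (H * ε) * ε ^ 2 := by positivity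
      linarith
    have hx2 : (X₂ k - ε) ^ 2 ≤ x ^ 2 := pow_le_pow_left₀ hXεk hxge 2
    have h3 : (m : ℝ) * q * q * Y₂ * Y₂ * (X₂ k + ε) ≤ N * Y₂ * ε := by
      have ha := mul_le_mul_of_nonneg_right h2 hY2pos.le
      have hb := mul_le_mul_of_nonneg_left hx2
        (mul_nonneg (mul_nonneg hH.le hY2pos.le) hε.le)
      have hcq : 0 ≤ H * c * q ^ 2 * (Y₂ * ε) := by positivity
      rw [hNdef]
      linarith
    have hNΔ : (m : ℝ) * q * q * Y₂ * Y₂ ≤ N * Δ k := by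
      rw [hΔk, show N * (Y₂ * ε / (X₂ k + ε)) = N * Y₂ * ε / (X₂ k + ε) by ring,
        le_div_iff₀ hXkε]
      linarith
    have hA'eq : N / (q * Y₂) * (q * Y₂) = N := div_mul_cancel₀ _ hqY.ne'
    have hApos : 0 < N / (q * Y₂) := div_pos hNpos hqY
    have hBA : (N / (q * Y₂) + (m : ℝ) * q) * (q * (Y₂ - Δ k)) ≤ N := by
      have h11 : N / (q * Y₂) * q * Δ k * Y₂ = N * Δ k := by
        linear_combination (Δ k) * hA'eq
      have h10 : ((m : ℝ) * q * q * Y₂) * Y₂ ≤ (N / (q * Y₂) * q * Δ k) * Y₂ := by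
        linarith
      have h9 : (m : ℝ) * q * q * Y₂ ≤ N / (q * Y₂) * q * Δ k :=
        le_of_mul_le_mul_right h10 hY2pos
      have h12 : 0 ≤ (m : ℝ) * q * q * Δ k :=
        mul_nonneg (mul_nonneg (mul_nonneg hm0.le hq.le) hq.le) hΔpos.le
      linarith
    -- choice of s
    obtain ⟨c₁, hc₁⟩ : ∃ z : ℝ, z = ((i₀ : ℝ) + (m : ℝ) * (i : ℝ)) * Q2 + Q3 := ⟨_, rfl⟩
    obtain ⟨s, hs⟩ : ∃ z : ℤ, z = ⌈(N / (q * Y₂) - c₁) / q⌉ := ⟨_, rfl⟩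
    have hs1 : N / (q * Y₂) - c₁ ≤ (s : ℝ) * q := by
      have h := Int.le_ceil ((N / (q * Y₂) - c₁) / q)
      rw [← hs] at h
      have h' := mul_le_mul_of_nonneg_right h hq.le
      rw [div_mul_cancel₀ _ hq.ne'] at h'
      exact h'
    have hs2 : (s : ℝ) * q ≤ N / (q * Y₂) - c₁ + q := by
      have h := (Int.ceil_lt_add_one ((N / (q * Y₂) - c₁) / q)).le
      rw [← hs] at h
      have h' := mul_le_mul_of_nonneg_right h hq.le
      have h'' : ((N / (q * Y₂) - c₁) / q + 1) * q = N / (q * Y₂) - c₁ + q := by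
        field_simp
      rw [h''] at h'
      exact h'
    have hVlow : ∀ r : ℕ, N / (q * Y₂) ≤
        ((s : ℝ) + (r : ℝ)) * q + ((i₀ : ℝ) + (m : ℝ) * (i : ℝ)) * Q2 + Q3 := by
      intro r
      have hrq : (0 : ℝ) ≤ (r : ℝ) * q := mul_nonneg (Nat.cast_nonneg r) hq.le
      have : ((s : ℝ) + (r : ℝ)) * q + ((i₀ : ℝ) + (m : ℝ) * (i : ℝ)) * Q2 + Q3
          = (s : ℝ) * q + (r : ℝ) * q + c₁ := by rw [hc₁]; ring
      rw [this]
      linarith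
    have hVhigh : ∀ r : ℕ, r < m →
        ((s : ℝ) + (r : ℝ)) * q + ((i₀ : ℝ) + (m : ℝ) * (i : ℝ)) * Q2 + Q3 ≤
          N / (q * Y₂) + (m : ℝ) * q := by
      intro r hr
      have hrm : (r : ℝ) ≤ (m : ℝ) - 1 := by
        have : (r : ℝ) + 1 ≤ (m : ℝ) := by exact_mod_cast hr
        linarith
      have : ((s : ℝ) + (r : ℝ)) * q + ((i₀ : ℝ) + (m : ℝ) * (i : ℝ)) * Q2 + Q3
          = (s : ℝ) * q + (r : ℝ) * q + c₁ := by rw [hc₁]; ring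
      rw [this]
      have hrq2 := mul_le_mul_of_nonneg_right hrm hq.le
      linarith
    have hVpos : ∀ r : ℕ, 0 <
        ((s : ℝ) + (r : ℝ)) * q + ((i₀ : ℝ) + (m : ℝ) * (i : ℝ)) * Q2 + Q3 :=
      fun r => lt_of_lt_of_le hApos (hVlow r)
    refine ⟨s, i, ?_, ?_⟩
    · -- membership
      intro r hr
      set V : ℝ := ((s : ℝ) + (r : ℝ)) * q + ((i₀ : ℝ) + (m : ℝ) * (i : ℝ)) * Q2 + Q3
        with hV
      have hV0 : 0 < V := hVpos r
      have hqV : 0 < q * V := mul_pos hq hV0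
      refine ⟨(x, N / (q * V)), ?_, ?_⟩
      · rw [hrect]
        refine ⟨⟨hxge, hxle⟩, ?_, ?_⟩
        · -- lower bound for y
          rw [le_div_iff₀ hqV]
          have h5 := mul_le_mul_of_nonneg_right (hVhigh r hr)
            (le_of_lt (mul_pos hq hYΔ))
          rw [hV]
          linarith [h5, hBA]
        · -- upper bound for y
          rw [div_le_iff₀ hqV]
          have h6 := mul_le_mul_of_nonneg_right (hVlow r) hqY.le
          have hA'eq2 : N / (q * Y₂) * (q * Y₂) = N := div_mul_cancel₀ _ hqY.ne'
          rw [hV]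
          linarith [h6, hA'eq2]
      · -- f2p maps the point to the target
        have hVne : V ≠ 0 := hV0.ne'
        rw [Prod.ext_iff]
        constructor
        · show H * (x ^ 2 + c * q ^ 2) / (q * (N / (q * V))) = V
          rw [← hNdef]
          field_simp
        · exact hwx
    · -- lower bound
      intro r hr
      have hmax : max (X₂ k - ε) 0 = X₂ k - ε := max_eq_left hXεk
      rw [hmax]
      have h7 : H * (X₂ k - ε) ^ 2 ≤ N := by
        rw [hNdef]
        linarith [mul_le_mul_of_nonneg_left hx2 hH.le,
          mul_pos (mul_pos hH hc) (pow_pos hq 2)]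
      have h8 : H * (X₂ k - ε) ^ 2 / (q * Y₂) ≤ N / (q * Y₂) :=
        (div_le_div_iff_of_pos_right hqY).mpr h7
      linarith [hVlow r]
  -- assemble
  obtain ⟨K, hK⟩ : ∃ z : ℕ → ℕ, z = Nat.nth p := ⟨_, rfl⟩
  have hKmem : ∀ j : ℕ, p (K j) := by
    intro j; rw [hK]; exact Nat.nth_mem_of_infinite hpinf j
  choose S I h1 h2 using fun j : ℕ => key (K j) (hKmem j)
  refine ⟨K, S, I, by rw [hK]; exact Nat.nth_strictMono hpinf,
    fun j r hr => h1 j r hr, ?_⟩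
  -- tendsto part
  intro r hr
  have hTm : Tendsto (fun j : ℕ => H * (max (X₂ j - ε) 0) ^ 2 / (q * Y₂) - Q3)
      atTop atTop := by
    have T0 : Tendsto (fun j : ℕ => X₂ j - ε) atTop atTop := by
      simpa [sub_eq_add_neg] using tendsto_atTop_add_const_right atTop (-ε) hX2T
    have T1 : Tendsto (fun j : ℕ => max (X₂ j - ε) 0) atTop atTop :=
      tendsto_atTop_mono (fun j => le_max_left _ _) T0
    have T2 : Tendsto (fun j : ℕ => (max (X₂ j - ε) 0) ^ 2) atTop atTop := by
      have := T1.atTop_mul_atTop₀ T1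
      simpa [← pow_two] using this
    have hHqY : 0 < H / (q * Y₂) := div_pos hH hqY
    have T3 := tendsto_atTop_add_const_right atTop (-Q3) (T2.const_mul_atTop hHqY)
    exact T3.congr fun j => by ring
  apply tendsto_atTop_mono _ hTm
  intro j
  have hKj : j ≤ K j := by
    rw [hK]; exact (Nat.nth_strictMono hpinf).le_apply
  have hX2m : X₂ j ≤ X₂ (K j) := by
    rw [hX2eq, hX2eq]
    have : (j : ℝ) ≤ (K j : ℝ) := by exact_mod_cast hKj
    have := mul_le_mul_of_nonneg_right this hαpos.le
    linarith
  have hmaxm : max (X₂ j - ε) 0 ≤ max (X₂ (K j) - ε) 0 :=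
    max_le_max (by linarith) le_rfl
  have hsqm : (max (X₂ j - ε) 0) ^ 2 ≤ (max (X₂ (K j) - ε) 0) ^ 2 :=
    pow_le_pow_left₀ (le_max_right _ _) hmaxm 2
  have hdivm : H * (max (X₂ j - ε) 0) ^ 2 / (q * Y₂) ≤
      H * (max (X₂ (K j) - ε) 0) ^ 2 / (q * Y₂) :=
    (div_le_div_iff_of_pos_right hqY).mpr (mul_le_mul_of_nonneg_left hsqm hH.le)
  have := h2 j r hr
  linarith
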